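/- Let k be a number field of degree n = [k:ℚ], let I be a nonzero fractional ideal of k, and let x = (x_v)_v be real weights indexed by the infinite places of k satisfying ∏_v e^{x_v} = N(I). Then for every nonzero f ∈ I one has Q_x(f) ≥ n. Moreover, for I = 𝒪_k, x ≡ 0 and f = 1 equality holds: Q_0(1) = n. -/

import Mathlib

open NumberField Finset
open scoped Classical

variable (k : Type*) [Field k] [NumberField k]

theorem absNorm_le_of_mem (I : FractionalIdeal (nonZeroDivisors (𝓞 k)) k) (hI : I ≠ 0) {f : k}
    (hf : f ∈ I) (hf0 : f ≠ 0) :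
    FractionalIdeal.absNorm I ≤ |Algebra.norm ℚ f| := by
  have hsp : FractionalIdeal.spanSingleton _ f ≤ I :=
    FractionalIdeal.spanSingleton_le_iff_mem.mpr hf
  have hJ1 : I⁻¹ * FractionalIdeal.spanSingleton _ f ≤ 1 := by
    calc I⁻¹ * FractionalIdeal.spanSingleton _ f ≤ I⁻¹ * I :=
        mul_right_mono (a := I⁻¹) hsp
    _ = 1 := by rw [mul_comm]; exact mul_inv_cancel₀ hI
  obtain ⟨J₀, hJ₀⟩ := FractionalIdeal.le_one_iff_exists_coeIdeal.mp hJ1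
  have hIJ : I * (J₀ : FractionalIdeal (nonZeroDivisors (𝓞 k)) k)
      = FractionalIdeal.spanSingleton _ f := by
    rw [hJ₀, ← mul_assoc, mul_inv_cancel₀ hI, one_mul]
  have hJ0 : J₀ ≠ ⊥ := by
    intro h
    apply hf0
    rw [← FractionalIdeal.spanSingleton_eq_zero_iff (S := nonZeroDivisors (𝓞 k)), ← hIJ, h]
    simp
  have h1 : (1 : ℚ) ≤ FractionalIdeal.absNorm
      (J₀ : FractionalIdeal (nonZeroDivisors (𝓞 k)) k) := by
    rw [FractionalIdeal.coeIdeal_absNorm]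
    exact_mod_cast Nat.one_le_iff_ne_zero.mpr (fun h => hJ0 (Ideal.absNorm_eq_zero_iff.mp h))
  calc FractionalIdeal.absNorm I = FractionalIdeal.absNorm I * 1 := (mul_one _).symm
    _ ≤ FractionalIdeal.absNorm I
        * FractionalIdeal.absNorm (J₀ : FractionalIdeal (nonZeroDivisors (𝓞 k)) k) :=
        mul_le_mul_of_nonneg_left h1 (FractionalIdeal.absNorm_nonneg I)
    _ = FractionalIdeal.absNorm (FractionalIdeal.spanSingleton _ f) := by
        rw [← hIJ, map_mul]
    _ = |Algebra.norm ℚ f| := FractionalIdeal.absNorm_span_singleton _ f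

/-- `Q_x(f) = ∑_{v real} |f|_v² e^{-2 x_v} + 2 ∑_{v complex} |f|_v² e^{-x_v}`. -/
noncomputable def arakelovQ (x : InfinitePlace k → ℝ) (f : k) : ℝ :=
  ∑ v : InfinitePlace k,
    if v.IsReal then (v f) ^ 2 * Real.exp (-2 * x v)
    else 2 * (v f) ^ 2 * Real.exp (-(x v))

theorem arakelovQ_ge_degree (I : FractionalIdeal (nonZeroDivisors (𝓞 k)) k)
    (hI : I ≠ 0) (x : InfinitePlace k → ℝ)
    (hx : ∏ v : InfinitePlace k, Real.exp (x v) = (FractionalIdeal.absNorm I : ℝ)) :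
    (∀ f ∈ I, f ≠ 0 → (Module.finrank ℚ k : ℝ) ≤ arakelovQ k x f) ∧
    arakelovQ k (fun _ => 0) (1 : k) = (Module.finrank ℚ k : ℝ) := by
  constructor
  · intro f hf hf0
    have hn0 : 0 < Module.finrank ℚ k := Module.finrank_pos
    set n : ℝ := (Module.finrank ℚ k : ℝ) with hn
    have hnR : (0:ℝ) < n := by rw [hn]; exact_mod_cast hn0
    set u : InfinitePlace k → ℝ := fun v => v f ^ v.mult * Real.exp (-(x v)) with hu
    have hupos : ∀ v, 0 < u v := fun v =>
      mul_pos (pow_pos (NumberField.InfinitePlace.pos_iff.mpr hf0) _) (Real.exp_pos _)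
    set z : InfinitePlace k → ℝ := fun v => u v ^ ((2:ℝ) / v.mult) with hzdef
    have hzpos : ∀ v, 0 < z v := fun v => Real.rpow_pos_of_pos (hupos v) _
    set w : InfinitePlace k → ℝ := fun v => (v.mult : ℝ) / n with hwdef
    have hmult : ∀ v : InfinitePlace k, ((v.mult : ℝ)) ≠ 0 := fun v => by
      have := v.mult_pos
      positivity
    have hw1 : ∑ v, w v = 1 := by
      rw [hwdef, ← Finset.sum_div]
      rw [show ∑ v : InfinitePlace k, (v.mult : ℝ) = n by
        rw [hn]; exact_mod_cast congrArg (Nat.cast : ℕ → ℝ)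
          (NumberField.InfinitePlace.sum_mult_eq (K := k))]
      field_simp
    have hQ : arakelovQ k x f = ∑ v, (v.mult : ℝ) * z v := by
      unfold arakelovQ
      refine Finset.sum_congr rfl fun v _ => ?_
      by_cases hv : v.IsReal
      · have hm : v.mult = 1 := by simp [NumberField.InfinitePlace.mult, hv]
        simp only [hv, if_true, hzdef, hu, hm]
        rw [show ((2:ℝ) / ((1:ℕ):ℝ)) = (2:ℝ) by norm_num, Real.rpow_two, mul_pow, pow_one,
          pow_two (Real.exp _), ← Real.exp_add,
          show -(x v) + -(x v) = -2 * x v by ring, Nat.cast_one, one_mul]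
      · have hm : v.mult = 2 := by simp [NumberField.InfinitePlace.mult, hv]
        simp only [hv, if_false, hzdef, hu, hm]
        rw [show ((2:ℝ) / ((2:ℕ):ℝ)) = (1:ℝ) by norm_num, Real.rpow_one]
        push_cast
        ring
    have amgm := Real.geom_mean_le_arith_mean_weighted Finset.univ w z
      (fun v _ => by rw [hwdef]; positivity) hw1 (fun v _ => (hzpos v).le)
    have hprod : ∏ v, z v ^ w v = (∏ v, u v) ^ ((2:ℝ)/n) := by
      rw [← Real.finset_prod_rpow _ _ (fun v _ => (hupos v).le)]
      refine Finset.prod_congr rfl fun v _ => ?_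
      rw [hzdef, hwdef, ← Real.rpow_mul (hupos v).le]
      congr 1
      field_simp
    have hNIpos : (0:ℚ) < FractionalIdeal.absNorm I :=
      lt_of_le_of_ne (FractionalIdeal.absNorm_nonneg I)
        (Ne.symm (fun h => hI (FractionalIdeal.absNorm_eq_zero_iff.mp h)))
    have huprod : (1:ℝ) ≤ ∏ v, u v := by
      rw [hu, Finset.prod_mul_distrib, NumberField.InfinitePlace.prod_eq_abs_norm]
      simp_rw [Real.exp_neg]
      rw [Finset.prod_inv_distrib, hx, ← div_eq_mul_inv, le_div_iff₀ (by exact_mod_cast hNIpos),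
        one_mul]
      exact_mod_cast absNorm_le_of_mem k I hI hf hf0
    have hone : (1:ℝ) ≤ ∏ v, z v ^ w v := by
      rw [hprod]
      exact Real.one_le_rpow huprod (by positivity)
    have hfinal : n * (∑ v, w v * z v) = ∑ v, (v.mult : ℝ) * z v := by
      rw [Finset.mul_sum]
      refine Finset.sum_congr rfl fun v _ => ?_
      rw [hwdef]
      field_simp
    calc n = n * 1 := (mul_one n).symm
      _ ≤ n * (∏ v, z v ^ w v) := by nlinarith
      _ ≤ n * (∑ v, w v * z v) := by nlinarith
      _ = arakelovQ k x f := by rw [hfinal, hQ]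
  · unfold arakelovQ
    simp only [map_one, one_pow, neg_zero, mul_zero, Real.exp_zero, mul_one, one_mul]
    rw [← NumberField.InfinitePlace.sum_mult_eq (K := k)]
    push_cast
    refine Finset.sum_congr rfl fun v _ => ?_
    by_cases hv : v.IsReal <;> simp [NumberField.InfinitePlace.mult, hv]
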